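/- Let K satisfy Assumption A2(i), let k ∈ {0,1}, and define s_n(t/n; b) = (1/(nb)) Σ_{i=1}^n |(t−i)/(nb)|^k K((t−i)/(nb)) for 1 ≤ t ≤ n and s(r; b) = ∫_{(r−1)/b}^{r/b} |z|^k K(z) dz for r ∈ (0,1]. Then there exists a constant C > 0, independent of n and b_n, such that sup_{b ∈ 𝔅_n} sup_{1 ≤ t ≤ n} |s_n(t/n; b) − s(t/n; b)| ≤ C/(n b_n). -/

import Mathlib

open MeasureTheory ProbabilityTheory Filter Finset Set Topology

noncomputable section

/-- A function is piecewise Lipschitz on `(0,1]`: there are finitely many mutually disjoint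
intervals covering `(0,1]` on each of which the function is Lipschitz. -/
def PiecewiseLipschitzOn01 (g : ℝ → ℝ) : Prop :=
  ∃ (q : ℕ) (I : Fin q → Set ℝ) (C : Fin q → NNReal),
    (∀ l, (I l).OrdConnected) ∧ Pairwise (Function.onFun Disjoint I) ∧
      (⋃ l, I l) = Set.Ioc (0 : ℝ) 1 ∧ ∀ l, LipschitzOnWith (C l) g (I l)

/-- Convergence in distribution (weak convergence of the laws of `X n` under `μ` to `ν`). -/
def TendstoInDistribution {Ω E : Type*} [MeasurableSpace Ω] [MeasurableSpace E]
    [TopologicalSpace E] (X : ℕ → Ω → E) (μ : Measure Ω) (ν : Measure E) : Prop :=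
  ∀ f : BoundedContinuousFunction E ℝ,
    Tendsto (fun n => ∫ ω, f (X n ω) ∂μ) atTop (𝓝 (∫ x, f x ∂ν))

/-- `X n = o_p(1)` : convergence to zero in probability. -/
def TendstoZeroInProb {Ω : Type*} [MeasurableSpace Ω] (μ : Measure Ω) (X : ℕ → Ω → ℝ) : Prop :=
  ∀ δ : ℝ, 0 < δ → Tendsto (fun n => (μ {ω | δ ≤ |X n ω|}).toReal) atTop (𝓝 0)

/-- An i.i.d. sequence of real random variables (indexed by `ι`, with reference index `t0`). -/
def IsIIDSeq {Ω : Type*} [MeasurableSpace Ω] (μ : Measure Ω) {ι : Type*}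
    (ε : ι → Ω → ℝ) (t0 : ι) : Prop :=
  (∀ t, Measurable (ε t)) ∧
    iIndepFun (m := fun _ : ι => (inferInstance : MeasurableSpace ℝ)) ε μ ∧
    ∀ t, IdentDistrib (ε t) (ε t0) μ μ

/-- The chi-square law with `m` degrees of freedom, as a Gamma(m/2, 1/2) law. -/
def chiSqMeasure (m : ℕ) : Measure ℝ := gammaMeasure ((m : ℝ) / 2) (1 / 2)

/-- `ν` is a centered Gaussian law on `Fin m → ℝ` with covariance matrix `S`
(characterized through one-dimensional projections). -/
def IsCenteredGaussianWithCov {m : ℕ} (ν : Measure (Fin m → ℝ))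
    (S : Matrix (Fin m) (Fin m) ℝ) : Prop :=
  IsProbabilityMeasure ν ∧ ∀ a : Fin m → ℝ,
    ν.map (fun z => ∑ i, a i * z i) =
      gaussianReal 0 (Real.toNNReal (∑ i, ∑ j, a i * S i j * a j))

/-- The matrix `Σ = (v/4) M`, `M` having diagonal entries `a` and off-diagonal entries 1. -/
def sigmaMat (m : ℕ) (v a : ℝ) : Matrix (Fin m) (Fin m) ℝ :=
  Matrix.of fun i j => (v / 4) * (if i = j then a else 1)

/-- The time-varying volatility `h_t = g(t/n)`. -/
def hvol (g : ℝ → ℝ) (n : ℕ) (t : ℤ) : ℝ := g ((t : ℝ) / (n : ℝ))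

/-- The autoregression residual `u_t(θ)`, with the convention `u_t(θ) = 0` for `t ≤ 0`. -/
def resid {Ω : Type*} (x : ℕ → ℤ → Ω → ℝ) {p : ℕ} (θ : Fin p → ℝ) (n : ℕ) (t : ℤ)
    (ω : Ω) : ℝ :=
  if 1 ≤ t then x n t ω - ∑ i : Fin p, θ i * x n (t - ((i : ℤ) + 1)) ω else 0

/-- The design matrix of the GLS estimator. -/
def glsMat {Ω : Type*} (x : ℕ → ℤ → Ω → ℝ) (g : ℝ → ℝ) (p n : ℕ) (ω : Ω) :
    Matrix (Fin p) (Fin p) ℝ :=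
  Matrix.of fun i j => ∑ t ∈ Finset.Icc (1 : ℤ) (n : ℤ),
    ((hvol g n t) ^ 2)⁻¹ * (x n (t - 1 - (i : ℤ)) ω * x n (t - 1 - (j : ℤ)) ω)

def glsVec {Ω : Type*} (x : ℕ → ℤ → Ω → ℝ) (g : ℝ → ℝ) (p n : ℕ) (ω : Ω) : Fin p → ℝ :=
  fun i => ∑ t ∈ Finset.Icc (1 : ℤ) (n : ℤ),
    ((hvol g n t) ^ 2)⁻¹ * (x n t ω * x n (t - 1 - (i : ℤ)) ω)

/-- The GLS estimator `θ̂`. -/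
def glsEst {Ω : Type*} (x : ℕ → ℤ → Ω → ℝ) (g : ℝ → ℝ) (p n : ℕ) (ω : Ω) : Fin p → ℝ :=
  Matrix.mulVec (glsMat x g p n ω)⁻¹ (glsVec x g p n ω)

/-- The design matrix of the OLS estimator. -/
def olsMat {Ω : Type*} (x : ℕ → ℤ → Ω → ℝ) (p n : ℕ) (ω : Ω) : Matrix (Fin p) (Fin p) ℝ :=
  Matrix.of fun i j => ∑ t ∈ Finset.Icc (1 : ℤ) (n : ℤ),
    x n (t - 1 - (i : ℤ)) ω * x n (t - 1 - (j : ℤ)) ω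

def olsVec {Ω : Type*} (x : ℕ → ℤ → Ω → ℝ) (p n : ℕ) (ω : Ω) : Fin p → ℝ :=
  fun i => ∑ t ∈ Finset.Icc (1 : ℤ) (n : ℤ), x n t ω * x n (t - 1 - (i : ℤ)) ω

/-- The OLS estimator `θ̌`. -/
def olsEst {Ω : Type*} (x : ℕ → ℤ → Ω → ℝ) (p n : ℕ) (ω : Ω) : Fin p → ℝ :=
  Matrix.mulVec (olsMat x p n ω)⁻¹ (olsVec x p n ω)

/-- The normalized score vector `S(θ)` (built with the true volatility `h_t`). -/
def glsScore {Ω : Type*} (x : ℕ → ℤ → Ω → ℝ) (g : ℝ → ℝ) (p m n : ℕ) (θ : Fin p → ℝ)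
    (ω : Ω) : Fin m → ℝ :=
  fun j => (1 / (2 * Real.sqrt (n : ℝ))) * ∑ t ∈ Finset.Icc (1 : ℤ) (n : ℤ),
    ((resid x θ n t ω ^ 2 / hvol g n t ^ 2 - 1) *
      (resid x θ n (t - ((j : ℤ) + 1)) ω ^ 2 / hvol g n t ^ 2))

/-- `n⁻¹ Σ u_t(θ̂)⁴ h_t⁻⁴`, the estimator of `E ε⁴`. -/
def glsE4 {Ω : Type*} (x : ℕ → ℤ → Ω → ℝ) (g : ℝ → ℝ) (p n : ℕ) (ω : Ω) : ℝ :=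
  (n : ℝ)⁻¹ * ∑ t ∈ Finset.Icc (1 : ℤ) (n : ℤ),
    resid x (glsEst x g p n ω) n t ω ^ 4 / hvol g n t ^ 4

def glsE2 {Ω : Type*} (x : ℕ → ℤ → Ω → ℝ) (g : ℝ → ℝ) (p n : ℕ) (ω : Ω) : ℝ :=
  (n : ℝ)⁻¹ * ∑ t ∈ Finset.Icc (1 : ℤ) (n : ℤ),
    resid x (glsEst x g p n ω) n t ω ^ 2 / hvol g n t ^ 2

def glsE8 {Ω : Type*} (x : ℕ → ℤ → Ω → ℝ) (g : ℝ → ℝ) (p n : ℕ) (ω : Ω) : ℝ :=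
  (n : ℝ)⁻¹ * ∑ t ∈ Finset.Icc (1 : ℤ) (n : ℤ),
    resid x (glsEst x g p n ω) n t ω ^ 8 / hvol g n t ^ 8

/-- The estimated weight matrix `Σ̂` of the (infeasible) GLS ARCH-LM statistic. -/
def glsSigma {Ω : Type*} (x : ℕ → ℤ → Ω → ℝ) (g : ℝ → ℝ) (p m n : ℕ) (ω : Ω) :
    Matrix (Fin m) (Fin m) ℝ :=
  sigmaMat m (glsE4 x g p n ω - (glsE2 x g p n ω) ^ 2) (glsE4 x g p n ω)

/-- The (infeasible) GLS ARCH-LM statistic `Q_GLS`. -/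
def QGLS {Ω : Type*} (x : ℕ → ℤ → Ω → ℝ) (g : ℝ → ℝ) (p m n : ℕ) (ω : Ω) : ℝ :=
  dotProduct (glsScore x g p m n (glsEst x g p n ω) ω)
    (Matrix.mulVec (glsSigma x g p m n ω)⁻¹ (glsScore x g p m n (glsEst x g p n ω) ω))

/-- The (infeasible) empirical autocovariance `γ̂(j)` of the squared GLS residuals. -/
def glsGamma {Ω : Type*} (x : ℕ → ℤ → Ω → ℝ) (g : ℝ → ℝ) (p n j : ℕ) (ω : Ω) : ℝ :=
  (n : ℝ)⁻¹ * ∑ t ∈ Finset.Icc ((j : ℤ) + 1) (n : ℤ),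
    (resid x (glsEst x g p n ω) n t ω ^ 2 - hvol g n t ^ 2) *
      (resid x (glsEst x g p n ω) n (t - (j : ℤ)) ω ^ 2 - hvol g n (t - (j : ℤ)) ^ 2)

def glsOmega4 {Ω : Type*} (x : ℕ → ℤ → Ω → ℝ) (g : ℝ → ℝ) (p n : ℕ) (ω : Ω) : ℝ :=
  ((n : ℝ)⁻¹ * ∑ t ∈ Finset.Icc (1 : ℤ) (n : ℤ), resid x (glsEst x g p n ω) n t ω ^ 4) /
    glsE4 x g p n ω

def glsOmega8 {Ω : Type*} (x : ℕ → ℤ → Ω → ℝ) (g : ℝ → ℝ) (p n : ℕ) (ω : Ω) : ℝ :=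
  ((n : ℝ)⁻¹ * ∑ t ∈ Finset.Icc (1 : ℤ) (n : ℤ), resid x (glsEst x g p n ω) n t ω ^ 8) /
    glsE8 x g p n ω

/-- The (infeasible) GLS Ljung–Box type portmanteau statistic `Q*_GLS`. -/
def QstarGLS {Ω : Type*} (x : ℕ → ℤ → Ω → ℝ) (g : ℝ → ℝ) (p m n : ℕ) (ω : Ω) : ℝ :=
  ((n : ℝ) * ((n : ℝ) + 2) * ∑ i ∈ Finset.Icc 1 m,
      (glsGamma x g p n i ω / glsGamma x g p n 0 ω) ^ 2 / ((n : ℝ) - (i : ℝ))) *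
    (glsOmega4 x g p n ω ^ 2 / glsOmega8 x g p n ω)

/-- Kernel weights entries `K_{ti}` (with `K_{tt} = 0`). -/
def kerEntry (K : ℝ → ℝ) (n : ℕ) (b : ℝ) (t i : ℤ) : ℝ :=
  if t = i then 0 else K (((t : ℝ) - (i : ℝ)) / ((n : ℝ) * b))

/-- Kernel weights `w_{ti}`. -/
def kerWeight (K : ℝ → ℝ) (n : ℕ) (b : ℝ) (t i : ℤ) : ℝ :=
  kerEntry K n b t i / ∑ j ∈ Finset.Icc (1 : ℤ) (n : ℤ), kerEntry K n b t j

/-- The kernel estimator `ĥ_t²` of the variance, built from the squared OLS residuals. -/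
def hhatSq {Ω : Type*} (x : ℕ → ℤ → Ω → ℝ) (K : ℝ → ℝ) (p n : ℕ) (b : ℝ) (t : ℤ)
    (ω : Ω) : ℝ :=
  ∑ i ∈ Finset.Icc (1 : ℤ) (n : ℤ), kerWeight K n b t i * resid x (olsEst x p n ω) n i ω ^ 2

/-- The design matrix of the adaptive (ALS) estimator. -/
def alsMat {Ω : Type*} (x : ℕ → ℤ → Ω → ℝ) (K : ℝ → ℝ) (p n : ℕ) (b : ℝ) (ω : Ω) :
    Matrix (Fin p) (Fin p) ℝ :=
  Matrix.of fun i j => ∑ t ∈ Finset.Icc (1 : ℤ) (n : ℤ),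
    (hhatSq x K p n b t ω)⁻¹ * (x n (t - 1 - (i : ℤ)) ω * x n (t - 1 - (j : ℤ)) ω)

def alsVec {Ω : Type*} (x : ℕ → ℤ → Ω → ℝ) (K : ℝ → ℝ) (p n : ℕ) (b : ℝ) (ω : Ω) :
    Fin p → ℝ :=
  fun i => ∑ t ∈ Finset.Icc (1 : ℤ) (n : ℤ),
    (hhatSq x K p n b t ω)⁻¹ * (x n t ω * x n (t - 1 - (i : ℤ)) ω)

/-- The adaptive estimator `θ̃`. -/
def alsEst {Ω : Type*} (x : ℕ → ℤ → Ω → ℝ) (K : ℝ → ℝ) (p n : ℕ) (b : ℝ) (ω : Ω) :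
    Fin p → ℝ :=
  Matrix.mulVec (alsMat x K p n b ω)⁻¹ (alsVec x K p n b ω)

/-- The approximated (adaptive) score vector `S̃(θ̃)`. -/
def alsScore {Ω : Type*} (x : ℕ → ℤ → Ω → ℝ) (K : ℝ → ℝ) (p m n : ℕ) (b : ℝ) (ω : Ω) :
    Fin m → ℝ :=
  fun j => (1 / (2 * Real.sqrt (n : ℝ))) * ∑ t ∈ Finset.Icc (1 : ℤ) (n : ℤ),
    ((resid x (alsEst x K p n b ω) n t ω ^ 2 / hhatSq x K p n b t ω - 1) *
      (resid x (alsEst x K p n b ω) n (t - ((j : ℤ) + 1)) ω ^ 2 / hhatSq x K p n b t ω))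

def alsE4 {Ω : Type*} (x : ℕ → ℤ → Ω → ℝ) (K : ℝ → ℝ) (p n : ℕ) (b : ℝ) (ω : Ω) : ℝ :=
  (n : ℝ)⁻¹ * ∑ t ∈ Finset.Icc (1 : ℤ) (n : ℤ),
    resid x (alsEst x K p n b ω) n t ω ^ 4 / (hhatSq x K p n b t ω) ^ 2

def alsE2 {Ω : Type*} (x : ℕ → ℤ → Ω → ℝ) (K : ℝ → ℝ) (p n : ℕ) (b : ℝ) (ω : Ω) : ℝ :=
  (n : ℝ)⁻¹ * ∑ t ∈ Finset.Icc (1 : ℤ) (n : ℤ),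
    resid x (alsEst x K p n b ω) n t ω ^ 2 / hhatSq x K p n b t ω

def alsE8 {Ω : Type*} (x : ℕ → ℤ → Ω → ℝ) (K : ℝ → ℝ) (p n : ℕ) (b : ℝ) (ω : Ω) : ℝ :=
  (n : ℝ)⁻¹ * ∑ t ∈ Finset.Icc (1 : ℤ) (n : ℤ),
    resid x (alsEst x K p n b ω) n t ω ^ 8 / (hhatSq x K p n b t ω) ^ 4

/-- The estimated weight matrix `Σ̃` of the adaptive ARCH-LM statistic. -/
def alsSigma {Ω : Type*} (x : ℕ → ℤ → Ω → ℝ) (K : ℝ → ℝ) (p m n : ℕ) (b : ℝ) (ω : Ω) :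
    Matrix (Fin m) (Fin m) ℝ :=
  sigmaMat m (alsE4 x K p n b ω - (alsE2 x K p n b ω) ^ 2) (alsE4 x K p n b ω)

/-- The adaptive ARCH-LM statistic `Q_ALS`. -/
def QALS {Ω : Type*} (x : ℕ → ℤ → Ω → ℝ) (K : ℝ → ℝ) (p m n : ℕ) (b : ℝ) (ω : Ω) : ℝ :=
  dotProduct (alsScore x K p m n b ω)
    (Matrix.mulVec (alsSigma x K p m n b ω)⁻¹ (alsScore x K p m n b ω))

/-- The adaptive empirical autocovariance `γ̃(j)` of the squared residuals. -/
def alsGamma {Ω : Type*} (x : ℕ → ℤ → Ω → ℝ) (K : ℝ → ℝ) (p n j : ℕ) (b : ℝ) (ω : Ω) : ℝ :=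
  (n : ℝ)⁻¹ * ∑ t ∈ Finset.Icc ((j : ℤ) + 1) (n : ℤ),
    (resid x (alsEst x K p n b ω) n t ω ^ 2 - hhatSq x K p n b t ω) *
      (resid x (alsEst x K p n b ω) n (t - (j : ℤ)) ω ^ 2 - hhatSq x K p n b (t - (j : ℤ)) ω)

def alsOmega4 {Ω : Type*} (x : ℕ → ℤ → Ω → ℝ) (K : ℝ → ℝ) (p n : ℕ) (b : ℝ) (ω : Ω) : ℝ :=
  ((n : ℝ)⁻¹ * ∑ t ∈ Finset.Icc (1 : ℤ) (n : ℤ), resid x (alsEst x K p n b ω) n t ω ^ 4) /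
    alsE4 x K p n b ω

def alsOmega8 {Ω : Type*} (x : ℕ → ℤ → Ω → ℝ) (K : ℝ → ℝ) (p n : ℕ) (b : ℝ) (ω : Ω) : ℝ :=
  ((n : ℝ)⁻¹ * ∑ t ∈ Finset.Icc (1 : ℤ) (n : ℤ), resid x (alsEst x K p n b ω) n t ω ^ 8) /
    alsE8 x K p n b ω

/-- The adaptive portmanteau statistic `Q*_ALS`. -/
def QstarALS {Ω : Type*} (x : ℕ → ℤ → Ω → ℝ) (K : ℝ → ℝ) (p m n : ℕ) (b : ℝ) (ω : Ω) : ℝ :=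
  ((n : ℝ) * ((n : ℝ) + 2) * ∑ i ∈ Finset.Icc 1 m,
      (alsGamma x K p n i b ω / alsGamma x K p n 0 b ω) ^ 2 / ((n : ℝ) - (i : ℝ))) *
    (alsOmega4 x K p n b ω ^ 2 / alsOmega8 x K p n b ω)

/-- The squared ARCH(1)-type error process started in the infinite past,
`u_t² = Σ_{i≥0} α^i h_{t-i}² ε_{t-i}² ⋯ ε_t²`, with `h_l = c0` for `l ≤ 0`. -/
def usqARCH {Ω : Type*} (g : ℝ → ℝ) (c0 α : ℝ) (ε : ℤ → Ω → ℝ) (n : ℕ) (t : ℤ) (ω : Ω) : ℝ :=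
  ∑' i : ℕ, α ^ i * (if 1 ≤ t - (i : ℤ) then g (((t : ℝ) - (i : ℝ)) / (n : ℝ)) else c0) ^ 2 *
    ∏ k ∈ Finset.range (i + 1), (ε (t - (k : ℤ)) ω) ^ 2

/-- Assumption A2(i) on the kernel `K`. -/
def KernelAssumption (K : ℝ → ℝ) : Prop :=
  Measurable K ∧ (∀ v, 0 ≤ K v) ∧ (∃ CK : ℝ, ∀ v, K v ≤ CK) ∧ (∫ v, K v = 1) ∧
    MonotoneOn K (Set.Iic 0) ∧ AntitoneOn K (Set.Ici 0) ∧
    Integrable (fun v => v ^ 2 * K v) ∧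
    (∃ (S : Finset ℝ) (K' : ℝ → ℝ), (∀ v ∉ S, HasDerivAt K (K' v) v) ∧
      Integrable (fun v => |v * K' v|)) ∧
    (∃ τ : ℝ, 0 < τ ∧
      Integrable (fun s => |s| ^ τ * ‖FourierTransform.fourier (fun v => (K v : ℂ)) s‖))


set_option maxHeartbeats 1600000

private lemma stmt12_cell_err {f : ℝ → ℝ} {a b B fs : ℝ} (hab : a ≤ b)
    (hf : IntervalIntegrable f volume a b)
    (hB : ∀ z ∈ Set.Ioc a b, |fs - f z| ≤ B) :
    |(b - a) * fs - ∫ z in a..b, f z| ≤ B * (b - a) := by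
  have h1 : (∫ z in a..b, (fs - f z)) = (b - a) * fs - ∫ z in a..b, f z := by
    rw [intervalIntegral.integral_sub intervalIntegrable_const hf,
      intervalIntegral.integral_const, smul_eq_mul]
  rw [← h1]
  have h2 := intervalIntegral.norm_integral_le_of_norm_le_const
    (f := fun z => fs - f z) (a := a) (b := b) (C := B) ?_
  · rw [Real.norm_eq_abs] at h2
    calc |∫ z in a..b, (fs - f z)| ≤ B * |b - a| := h2
    _ = B * (b - a) := by rw [abs_of_nonneg (by linarith)]
  · intro x hx
    rw [Set.uIoc_of_le hab] at hx
    simpa [Real.norm_eq_abs] using hB x hx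

private lemma stmt12_const_le_cell {ψ : ℝ → ℝ} {a b c : ℝ} (hab : a ≤ b)
    (hψ : IntervalIntegrable ψ volume a b)
    (hc : ∀ z ∈ Set.Icc a b, c ≤ ψ z) :
    c * (b - a) ≤ ∫ z in a..b, ψ z := by
  have := intervalIntegral.integral_mono_on hab intervalIntegrable_const hψ hc
  rwa [intervalIntegral.integral_const, smul_eq_mul, mul_comm] at this

private lemma stmt12_sum_cells_le {ψ : ℝ → ℝ} (hψ : Integrable ψ)
    (hψ0 : ∀ z, 0 ≤ ψ z) {h : ℝ} (hh : 0 < h) (m : ℕ) :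
    ∑ j ∈ Finset.range m, (∫ z in ((j:ℝ)*h)..(((j:ℝ)+1)*h), ψ z) ≤ ∫ z, ψ z := by
  have hadj := intervalIntegral.sum_integral_adjacent_intervals
    (a := fun j : ℕ => (j:ℝ)*h) (n := m) (μ := volume) (f := ψ)
    (fun j _ => hψ.intervalIntegrable)
  have hsum : ∑ j ∈ Finset.range m, (∫ z in ((j:ℝ)*h)..(((j:ℝ)+1)*h), ψ z)
      = ∫ z in (((0:ℕ):ℝ)*h)..(((m:ℕ):ℝ)*h), ψ z := by
    rw [← hadj]
    refine Finset.sum_congr rfl fun j _ => ?_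
    norm_num
  rw [hsum]
  have hle : ((0:ℕ):ℝ)*h ≤ ((m:ℕ):ℝ)*h := by
    norm_num; positivity
  rw [intervalIntegral.integral_of_le hle]
  calc ∫ z in Set.Ioc (((0:ℕ):ℝ)*h) (((m:ℕ):ℝ)*h), ψ z ≤ ∫ z, ψ z :=
    setIntegral_le_integral hψ (ae_of_all _ hψ0)

private lemma stmt12_side {G : ℝ → ℝ} (hGm : Measurable G) (hG0 : ∀ z, 0 ≤ G z)
    {CK : ℝ} (hCK : ∀ z, G z ≤ CK) (hanti : AntitoneOn G (Set.Ici 0))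
    (hGi : Integrable G) (hG1 : (∫ z, G z) ≤ 1)
    (hzGi : Integrable (fun z => |z| * G z)) {M1 : ℝ} (hM1 : (∫ z, |z| * G z) ≤ M1)
    {k : ℕ} (hk : k = 0 ∨ k = 1) {h : ℝ} (hh : 0 < h)
    (t : ℕ) (s : ℕ → ℝ) (hs : ∀ j : ℕ, s j ∈ Set.Icc ((j:ℝ)*h) (((j:ℝ)+1)*h)) :
    ∑ j ∈ Finset.range t,
        |h * (|s j| ^ k * G (s j)) - ∫ z in ((j:ℝ)*h)..(((j:ℝ)+1)*h), |z| ^ k * G z|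
      ≤ (2*CK + 3*M1 + 4) * h := by
  have hCK0 : 0 ≤ CK := (hG0 0).trans (hCK 0)
  have hM10 : 0 ≤ M1 :=
    le_trans (integral_nonneg fun z => mul_nonneg (abs_nonneg z) (hG0 z)) hM1
  have hfi : Integrable (fun z => |z| ^ k * G z) := by
    rcases hk with rfl | rfl
    · simpa using hGi
    · simpa using hzGi
  have hle : ∀ j : ℕ, (j:ℝ)*h ≤ ((j:ℝ)+1)*h := by
    intro j
    have : ((j:ℝ)+1)*h = (j:ℝ)*h + h := by ring
    linarith [hh.le]
  have h0le : ∀ j : ℕ, (0:ℝ) ≤ (j:ℝ)*h := fun j => by positivity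
  have hGcell : ∀ j : ℕ, ∀ z ∈ Set.Icc ((j:ℝ)*h) (((j:ℝ)+1)*h),
      G (((j:ℝ)+1)*h) ≤ G z ∧ G z ≤ G ((j:ℝ)*h) := by
    intro j z hz
    have hz0 : (0:ℝ) ≤ z := le_trans (h0le j) hz.1
    exact ⟨hanti (Set.mem_Ici.2 hz0) (Set.mem_Ici.2 (le_trans hz0 hz.2)) hz.2,
      hanti (Set.mem_Ici.2 (h0le j)) (Set.mem_Ici.2 hz0) hz.1⟩
  have hGsum : ∀ m : ℕ, ∑ j ∈ Finset.range m, h * G (((j:ℝ)+1)*h) ≤ 1 := by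
    intro m
    have step : ∀ j ∈ Finset.range m,
        h * G (((j:ℝ)+1)*h) ≤ ∫ z in ((j:ℝ)*h)..(((j:ℝ)+1)*h), G z := by
      intro j _
      have := stmt12_const_le_cell (hle j) hGi.intervalIntegrable
        (fun z hz => (hGcell j z hz).1)
      have hba : (((j:ℝ)+1)*h - (j:ℝ)*h) = h := by ring
      rw [hba] at this
      linarith [this]
    calc ∑ j ∈ Finset.range m, h * G (((j:ℝ)+1)*h)
        ≤ ∑ j ∈ Finset.range m, ∫ z in ((j:ℝ)*h)..(((j:ℝ)+1)*h), G z :=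
          Finset.sum_le_sum step
      _ ≤ ∫ z, G z := stmt12_sum_cells_le hGi hG0 hh m
      _ ≤ 1 := hG1
  have hS1 : ∑ j ∈ Finset.range t, h * G ((j:ℝ)*h) ≤ CK*h + 1 := by
    cases t with
    | zero => simp; positivity
    | succ m =>
      rw [Finset.sum_range_succ']
      have h0 : h * G (((0:ℕ):ℝ)*h) ≤ CK * h := by
        norm_num
        calc h * G 0 ≤ h * CK := mul_le_mul_of_nonneg_left (hCK 0) hh.le
          _ = CK * h := mul_comm _ _
      have h1 : ∑ i ∈ Finset.range m, h * G (((i+1:ℕ):ℝ)*h) ≤ 1 := by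
        refine le_trans (le_of_eq (Finset.sum_congr rfl fun i _ => ?_)) (hGsum m)
        push_cast
        ring_nf
      linarith
  have hΔsum : ∑ j ∈ Finset.range t, (G ((j:ℝ)*h) - G (((j:ℝ)+1)*h)) ≤ CK := by
    have heq : ∑ j ∈ Finset.range t, (G ((j:ℝ)*h) - G (((j:ℝ)+1)*h))
        = ∑ j ∈ Finset.range t, ((fun i : ℕ => G ((i:ℝ)*h)) j - (fun i : ℕ => G ((i:ℝ)*h)) (j+1)) := by
      refine Finset.sum_congr rfl fun j _ => ?_
      push_cast
      ring_nf
    rw [heq, Finset.sum_range_sub' (fun i : ℕ => G ((i:ℝ)*h))]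
    have : (0:ℝ) ≤ G ((t:ℝ)*h) := hG0 _
    have h2 : G (((0:ℕ):ℝ)*h) ≤ CK := hCK _
    simp only [Nat.cast_zero, zero_mul] at h2 ⊢
    linarith [hCK (0:ℝ)]
  have hS2 : ∑ j ∈ Finset.range t, ((j:ℝ)*h) * (G ((j:ℝ)*h) - G (((j:ℝ)+1)*h)) ≤ 1 := by
    set c : ℕ → ℝ := fun j => (j:ℝ)*h*G ((j:ℝ)*h) with hc
    have hident : ∀ j : ℕ, ((j:ℝ)*h) * (G ((j:ℝ)*h) - G (((j:ℝ)+1)*h))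
        = (c j - c (j+1)) + h * G (((j:ℝ)+1)*h) := by
      intro j
      simp only [hc]
      push_cast
      ring
    rw [Finset.sum_congr rfl fun j _ => hident j, Finset.sum_add_distrib,
      Finset.sum_range_sub' c]
    have hc0 : c 0 = 0 := by simp [hc]
    have hct : 0 ≤ c t := mul_nonneg (mul_nonneg (Nat.cast_nonneg t) hh.le) (hG0 _)
    linarith [hGsum t]
  rcases hk with rfl | rfl
  · -- k = 0
    have hcell : ∀ j ∈ Finset.range t,
        |h * (|s j| ^ 0 * G (s j)) - ∫ z in ((j:ℝ)*h)..(((j:ℝ)+1)*h), |z| ^ 0 * G z|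
          ≤ (G ((j:ℝ)*h) - G (((j:ℝ)+1)*h)) * h := by
      intro j _
      have hba : ((j:ℝ)+1)*h - (j:ℝ)*h = h := by ring
      have := stmt12_cell_err (f := fun z => |z| ^ (0:ℕ) * G z) (hle j)
        hfi.intervalIntegrable (fs := |s j| ^ 0 * G (s j))
        (B := G ((j:ℝ)*h) - G (((j:ℝ)+1)*h)) ?_
      · rwa [hba] at this
      · intro z hz
        have hzc := hGcell j z ⟨hz.1.le, hz.2⟩
        have hsc := hGcell j (s j) (hs j)
        simp only [pow_zero, one_mul]
        rw [abs_sub_le_iff]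
        constructor <;> linarith [hzc.1, hzc.2, hsc.1, hsc.2]
    calc ∑ j ∈ Finset.range t,
        |h * (|s j| ^ 0 * G (s j)) - ∫ z in ((j:ℝ)*h)..(((j:ℝ)+1)*h), |z| ^ 0 * G z|
        ≤ ∑ j ∈ Finset.range t, (G ((j:ℝ)*h) - G (((j:ℝ)+1)*h)) * h :=
          Finset.sum_le_sum hcell
      _ = (∑ j ∈ Finset.range t, (G ((j:ℝ)*h) - G (((j:ℝ)+1)*h))) * h :=
          (Finset.sum_mul _ _ _).symm
      _ ≤ CK * h := mul_le_mul_of_nonneg_right hΔsum hh.le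
      _ ≤ (2*CK + 3*M1 + 4) * h := by nlinarith [hh.le]
  · -- k = 1
    rcases le_or_gt h 1 with hsm | hbig
    · -- fine bound, h ≤ 1
      have hcell : ∀ j ∈ Finset.range t,
          |h * (|s j| ^ 1 * G (s j)) - ∫ z in ((j:ℝ)*h)..(((j:ℝ)+1)*h), |z| ^ 1 * G z|
            ≤ (h * G ((j:ℝ)*h) + (((j:ℝ)+1)*h) * (G ((j:ℝ)*h) - G (((j:ℝ)+1)*h))) * h := by
        intro j _
        have hba : ((j:ℝ)+1)*h - (j:ℝ)*h = h := by ring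
        have := stmt12_cell_err (f := fun z => |z| ^ (1:ℕ) * G z) (hle j)
          hfi.intervalIntegrable (fs := |s j| ^ 1 * G (s j))
          (B := h * G ((j:ℝ)*h) + (((j:ℝ)+1)*h) * (G ((j:ℝ)*h) - G (((j:ℝ)+1)*h))) ?_
        · rwa [hba] at this
        · intro z hz
          have hzI : z ∈ Set.Icc ((j:ℝ)*h) (((j:ℝ)+1)*h) := ⟨hz.1.le, hz.2⟩
          have hzc := hGcell j z hzI
          have hsc := hGcell j (s j) (hs j)
          have hz0 : (0:ℝ) ≤ z := le_trans (h0le j) hzI.1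
          have hs0 : (0:ℝ) ≤ s j := le_trans (h0le j) (hs j).1
          simp only [pow_one, abs_of_nonneg hz0, abs_of_nonneg hs0]
          have hmono : G (((j:ℝ)+1)*h) ≤ G ((j:ℝ)*h) :=
            (hGcell j ((j:ℝ)*h) ⟨le_rfl, hle j⟩).1
          have hu1 : s j * G (s j) ≤ (((j:ℝ)+1)*h) * G ((j:ℝ)*h) :=
            mul_le_mul (hs j).2 hsc.2 (hG0 _) (le_trans (h0le j) (hle j))
          have hu2 : z * G z ≤ (((j:ℝ)+1)*h) * G ((j:ℝ)*h) :=
            mul_le_mul hzI.2 hzc.2 (hG0 _) (le_trans (h0le j) (hle j))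
          have hl1 : ((j:ℝ)*h) * G (((j:ℝ)+1)*h) ≤ s j * G (s j) :=
            mul_le_mul (hs j).1 hsc.1 (hG0 _) hs0
          have hl2 : ((j:ℝ)*h) * G (((j:ℝ)+1)*h) ≤ z * G z :=
            mul_le_mul hzI.1 hzc.1 (hG0 _) hz0
          have hring1 : (((j:ℝ)+1)*h) * G (((j:ℝ)+1)*h) - ((j:ℝ)*h) * G (((j:ℝ)+1)*h)
              = h * G (((j:ℝ)+1)*h) := by ring
          have hmono2 : h * G (((j:ℝ)+1)*h) ≤ h * G ((j:ℝ)*h) :=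
            mul_le_mul_of_nonneg_left hmono hh.le
          rw [abs_sub_le_iff]
          constructor
          · nlinarith [hu1, hl2, hring1, hmono2]
          · nlinarith [hu2, hl1, hring1, hmono2]
      have hBsum : ∑ j ∈ Finset.range t,
          (h * G ((j:ℝ)*h) + (((j:ℝ)+1)*h) * (G ((j:ℝ)*h) - G (((j:ℝ)+1)*h)))
            ≤ 2*CK*h + 2 := by
        rw [Finset.sum_add_distrib]
        have e2 : ∑ j ∈ Finset.range t, (((j:ℝ)+1)*h) * (G ((j:ℝ)*h) - G (((j:ℝ)+1)*h))
            = ∑ j ∈ Finset.range t, ((j:ℝ)*h) * (G ((j:ℝ)*h) - G (((j:ℝ)+1)*h))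
              + ∑ j ∈ Finset.range t, h * (G ((j:ℝ)*h) - G (((j:ℝ)+1)*h)) := by
          rw [← Finset.sum_add_distrib]
          exact Finset.sum_congr rfl fun j _ => by ring
        have e3 : ∑ j ∈ Finset.range t, h * (G ((j:ℝ)*h) - G (((j:ℝ)+1)*h))
            = h * ∑ j ∈ Finset.range t, (G ((j:ℝ)*h) - G (((j:ℝ)+1)*h)) :=
          (Finset.mul_sum _ _ _).symm
        have e4 : h * ∑ j ∈ Finset.range t, (G ((j:ℝ)*h) - G (((j:ℝ)+1)*h)) ≤ h * CK :=
          mul_le_mul_of_nonneg_left hΔsum hh.le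
        rw [e2, e3]
        nlinarith [hS1, hS2]
      have hsq : h * h ≤ h := mul_le_of_le_one_right hh.le hsm
      calc ∑ j ∈ Finset.range t,
          |h * (|s j| ^ 1 * G (s j)) - ∫ z in ((j:ℝ)*h)..(((j:ℝ)+1)*h), |z| ^ 1 * G z|
          ≤ ∑ j ∈ Finset.range t,
            (h * G ((j:ℝ)*h) + (((j:ℝ)+1)*h) * (G ((j:ℝ)*h) - G (((j:ℝ)+1)*h))) * h :=
            Finset.sum_le_sum hcell
        _ = (∑ j ∈ Finset.range t,
            (h * G ((j:ℝ)*h) + (((j:ℝ)+1)*h) * (G ((j:ℝ)*h) - G (((j:ℝ)+1)*h)))) * h :=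
            (Finset.sum_mul _ _ _).symm
        _ ≤ (2*CK*h + 2) * h := mul_le_mul_of_nonneg_right hBsum hh.le
        _ ≤ (2*CK + 3*M1 + 4) * h := by
            nlinarith [mul_nonneg hCK0 (sub_nonneg.2 hsq), mul_nonneg hM10 hh.le, hh.le]
    · -- crude bound, 1 < h
      have zG1 : ∀ z : ℝ, 0 ≤ z → z * G z ≤ 1 := by
        intro z hz
        have h1 : G z * (z - 0) ≤ ∫ w in (0:ℝ)..z, G w :=
          stmt12_const_le_cell hz hGi.intervalIntegrable
            (fun w hw => hanti (Set.mem_Ici.2 hw.1) (Set.mem_Ici.2 hz) hw.2)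
        have h2 : (∫ w in (0:ℝ)..z, G w) ≤ ∫ w, G w := by
          rw [intervalIntegral.integral_of_le hz]
          exact setIntegral_le_integral hGi (ae_of_all _ hG0)
        nlinarith [hG1]
      set ψ : ℝ → ℝ := fun z => |z| * G z + h * G z with hψ
      have hψi : Integrable ψ := hzGi.add (hGi.const_mul h)
      have hψ0 : ∀ z, 0 ≤ ψ z := fun z =>
        add_nonneg (mul_nonneg (abs_nonneg z) (hG0 z)) (mul_nonneg hh.le (hG0 z))
      have hψint : (∫ z, ψ z) ≤ M1 + h := by
        rw [hψ, integral_add hzGi (hGi.const_mul h), integral_const_mul]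
        have : h * ∫ z, G z ≤ h * 1 := mul_le_mul_of_nonneg_left hG1 hh.le
        linarith [hM1]
      have hcell : ∀ j ∈ Finset.range t,
          |h * (|s j| ^ 1 * G (s j)) - ∫ z in ((j:ℝ)*h)..(((j:ℝ)+1)*h), |z| ^ 1 * G z|
            ≤ h * (s j * G (s j)) + ∫ z in ((j:ℝ)*h)..(((j:ℝ)+1)*h), |z| ^ 1 * G z := by
        intro j _
        have hs0 : 0 ≤ s j := le_trans (h0le j) (hs j).1
        have hint0 : 0 ≤ ∫ z in ((j:ℝ)*h)..(((j:ℝ)+1)*h), |z| ^ 1 * G z :=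
          intervalIntegral.integral_nonneg (hle j)
            (fun z _ => mul_nonneg (pow_nonneg (abs_nonneg z) 1) (hG0 z))
        have h1 : |h * (|s j| ^ 1 * G (s j))| = h * (s j * G (s j)) := by
          rw [abs_of_nonneg (mul_nonneg hh.le (mul_nonneg (pow_nonneg (abs_nonneg _) 1) (hG0 _))), pow_one, abs_of_nonneg hs0]
        calc |h * (|s j| ^ 1 * G (s j)) - ∫ z in ((j:ℝ)*h)..(((j:ℝ)+1)*h), |z| ^ 1 * G z|
            ≤ |h * (|s j| ^ 1 * G (s j))|
              + |∫ z in ((j:ℝ)*h)..(((j:ℝ)+1)*h), |z| ^ 1 * G z| := abs_sub _ _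
          _ = h * (s j * G (s j)) + ∫ z in ((j:ℝ)*h)..(((j:ℝ)+1)*h), |z| ^ 1 * G z := by
              rw [h1, abs_of_nonneg hint0]
      have hIsum : ∑ j ∈ Finset.range t,
          (∫ z in ((j:ℝ)*h)..(((j:ℝ)+1)*h), |z| ^ 1 * G z) ≤ M1 := by
        have hi2 : Integrable (fun z => |z| ^ (1:ℕ) * G z) := by simpa using hzGi
        have := stmt12_sum_cells_le (ψ := fun z => |z| ^ (1:ℕ) * G z) hi2
          (fun z => mul_nonneg (pow_nonneg (abs_nonneg z) 1) (hG0 z)) hh t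
        refine le_trans this ?_
        simpa using hM1
      have hsG : ∑ j ∈ Finset.range t, h * (s j * G (s j)) ≤ 2*M1 + 3*h := by
        cases t with
        | zero => simp; nlinarith
        | succ m =>
          rw [Finset.sum_range_succ']
          have term0 : h * (s 0 * G (s 0)) ≤ h := by
            have := zG1 (s 0) (le_trans (h0le 0) (hs 0).1)
            nlinarith [hh.le]
          have terms : ∑ j ∈ Finset.range m, h * (s (j+1) * G (s (j+1))) ≤ 2*(M1 + h) := by
            have hterm : ∀ j ∈ Finset.range m,
                h * (s (j+1) * G (s (j+1)))
                  ≤ 2 * ∫ z in ((j:ℝ)*h)..(((j:ℝ)+1)*h), ψ z := by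
              intro j _
              have hsj := hs (j+1)
              have hcast : ((j+1:ℕ):ℝ) = (j:ℝ)+1 := by push_cast; ring
              rw [hcast] at hsj
              have hs0' : 0 ≤ s (j+1) := le_trans (by positivity) hsj.1
              have hGs : G (s (j+1)) ≤ G (((j:ℝ)+1)*h) :=
                hanti (Set.mem_Ici.2 (by positivity)) (Set.mem_Ici.2 hs0') hsj.1
              have hs2 : s (j+1) ≤ ((j:ℝ)+2)*h := by
                have hr : (((j:ℝ)+1)+1)*h = ((j:ℝ)+2)*h := by ring
                linarith [hsj.2]
              have hA : s (j+1) * G (s (j+1)) ≤ (((j:ℝ)+2)*h) * G (((j:ℝ)+1)*h) :=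
                mul_le_mul hs2 hGs (hG0 _) (by positivity)
              have hA2 : (((j:ℝ)+2)*h) * G (((j:ℝ)+1)*h)
                  ≤ 2*((((j:ℝ)+1)*h) * G (((j:ℝ)+1)*h)) := by
                nlinarith [mul_nonneg (h0le j) (hG0 (((j:ℝ)+1)*h))]
              have hB : ((((j:ℝ)+1)*h) * G (((j:ℝ)+1)*h)) * h
                  ≤ ∫ z in ((j:ℝ)*h)..(((j:ℝ)+1)*h), ψ z := by
                have hba : ((j:ℝ)+1)*h - (j:ℝ)*h = h := by ring
                have := stmt12_const_le_cell (hle j) hψi.intervalIntegrable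
                  (c := (((j:ℝ)+1)*h) * G (((j:ℝ)+1)*h)) ?_
                · rwa [hba] at this
                · intro z hz
                  have hz0 : 0 ≤ z := le_trans (h0le j) hz.1
                  have hGz : G (((j:ℝ)+1)*h) ≤ G z := (hGcell j z hz).1
                  have hz1 : ((j:ℝ)+1)*h ≤ z + h := by
                    have hr : ((j:ℝ)+1)*h = (j:ℝ)*h + h := by ring
                    linarith [hz.1]
                  show (((j:ℝ)+1)*h) * G (((j:ℝ)+1)*h) ≤ |z| * G z + h * G z
                  rw [abs_of_nonneg hz0]
                  nlinarith [hG0 z, hh.le, mul_le_mul hz1 hGz (hG0 _) (by positivity : (0:ℝ) ≤ z + h)]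
              nlinarith [mul_le_mul_of_nonneg_left hA hh.le,
                mul_le_mul_of_nonneg_left hA2 hh.le, hB]
            calc ∑ j ∈ Finset.range m, h * (s (j+1) * G (s (j+1)))
                ≤ ∑ j ∈ Finset.range m, 2 * ∫ z in ((j:ℝ)*h)..(((j:ℝ)+1)*h), ψ z :=
                  Finset.sum_le_sum hterm
              _ = 2 * ∑ j ∈ Finset.range m, ∫ z in ((j:ℝ)*h)..(((j:ℝ)+1)*h), ψ z :=
                  (Finset.mul_sum _ _ _).symm
              _ ≤ 2 * ∫ z, ψ z := by
                  have := stmt12_sum_cells_le hψi hψ0 hh m; linarith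
              _ ≤ 2*(M1 + h) := by linarith [hψint]
          linarith
      calc ∑ j ∈ Finset.range t,
          |h * (|s j| ^ 1 * G (s j)) - ∫ z in ((j:ℝ)*h)..(((j:ℝ)+1)*h), |z| ^ 1 * G z|
          ≤ ∑ j ∈ Finset.range t,
            (h * (s j * G (s j)) + ∫ z in ((j:ℝ)*h)..(((j:ℝ)+1)*h), |z| ^ 1 * G z) :=
            Finset.sum_le_sum hcell
        _ = ∑ j ∈ Finset.range t, h * (s j * G (s j))
            + ∑ j ∈ Finset.range t, ∫ z in ((j:ℝ)*h)..(((j:ℝ)+1)*h), |z| ^ 1 * G z :=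
            Finset.sum_add_distrib
        _ ≤ (2*M1 + 3*h) + M1 := add_le_add hsG hIsum
        _ ≤ (2*CK + 3*M1 + 4) * h := by nlinarith [hbig, hCK0, hM10, hh.le]


/-- Lemma 2(a): uniform approximation of the kernel Riemann sums. -/
theorem stmt_12 (K : ℝ → ℝ) (hK : KernelAssumption K)
    (k : ℕ) (hk : k = 0 ∨ k = 1)
    (bseq : ℕ → ℝ) (hbpos : ∀ n, 0 < bseq n)
    (hb0 : Tendsto bseq atTop (𝓝 0))
    (hnb : Tendsto (fun n : ℕ => (n : ℝ) * bseq n) atTop atTop)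
    (cmin cmax : ℝ) (hcmin : 0 < cmin) (hcc : cmin < cmax) :
    ∃ C : ℝ, 0 < C ∧ ∀ n : ℕ, 1 ≤ n →
      ∀ b ∈ Set.Icc (cmin * bseq n) (cmax * bseq n), ∀ t ∈ Finset.Icc 1 n,
        |(1 / ((n : ℝ) * b)) * ∑ i ∈ Finset.Icc 1 n,
              |((t : ℝ) - (i : ℝ)) / ((n : ℝ) * b)| ^ k *
                K (((t : ℝ) - (i : ℝ)) / ((n : ℝ) * b)) -
            ∫ z in (((t : ℝ) / (n : ℝ) - 1) / b)..(((t : ℝ) / (n : ℝ)) / b),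
              |z| ^ k * K z| ≤ C / ((n : ℝ) * bseq n) := by
  obtain ⟨hKm, hK0, ⟨CK, hCK⟩, hKint, hKmono, hKanti, hK2, -, -⟩ := hK
  have hKi : Integrable K := by
    by_contra hcon
    rw [MeasureTheory.integral_undef hcon] at hKint
    norm_num at hKint
  have hzKi : Integrable (fun z => |z| * K z) := by
    refine (hKi.add hK2).mono' ((measurable_id.abs.mul hKm).aestronglyMeasurable)
      (ae_of_all _ fun z => ?_)
    have h1 : |z| ≤ 1 + z^2 := by nlinarith [sq_nonneg (|z| - 1), sq_abs z, abs_nonneg z]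
    have h2 : (0:ℝ) ≤ |z| * K z := mul_nonneg (abs_nonneg z) (hK0 z)
    rw [Real.norm_eq_abs, abs_of_nonneg h2]
    calc |z| * K z ≤ (1 + z^2) * K z := mul_le_mul_of_nonneg_right h1 (hK0 z)
    _ = K z + z^2 * K z := by ring
  set M1 : ℝ := ∫ z, |z| * K z with hM1def
  have hM10 : 0 ≤ M1 := integral_nonneg (fun z => mul_nonneg (abs_nonneg z) (hK0 z))
  have hCK0 : 0 ≤ CK := (hK0 0).trans (hCK 0)
  set C0 : ℝ := 2*CK + 3*M1 + 4 with hC0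
  have hC0pos : 0 < C0 := by rw [hC0]; linarith
  -- negative-side kernel
  set Gn : ℝ → ℝ := fun z => K (-z) with hGndef
  have hGnm : Measurable Gn := hKm.comp measurable_neg
  have hGn0 : ∀ z, 0 ≤ Gn z := fun z => hK0 _
  have hGnCK : ∀ z, Gn z ≤ CK := fun z => hCK _
  have hGnanti : AntitoneOn Gn (Set.Ici 0) := by
    intro x hx y hy hxy
    exact hKmono (Set.mem_Iic.2 (neg_nonpos.2 (Set.mem_Ici.1 hy)))
      (Set.mem_Iic.2 (neg_nonpos.2 (Set.mem_Ici.1 hx))) (neg_le_neg hxy)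
  have hGni : Integrable Gn := hKi.comp_neg
  have hGn1 : (∫ z, Gn z) ≤ 1 := by
    rw [hGndef]
    rw [integral_neg_eq_self K volume]
    exact le_of_eq hKint
  have hzGni : Integrable (fun z => |z| * Gn z) := by
    have := hzKi.comp_neg
    simpa [abs_neg] using this
  have hMn1 : (∫ z, |z| * Gn z) ≤ M1 := by
    have heq : (fun z : ℝ => |z| * Gn z) = fun z : ℝ => |(-z)| * K (-z) := by
      funext z; rw [abs_neg]
    rw [heq, integral_neg_eq_self (fun z : ℝ => |z| * K z) volume]
  refine ⟨2*C0/cmin + 1, by positivity, ?_⟩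
  intro n hn b hb t ht
  obtain ⟨ht1, htn⟩ := Finset.mem_Icc.mp ht
  have hbn := hbpos n
  have hb0' : (0:ℝ) < b := lt_of_lt_of_le (by positivity) hb.1
  have hn0 : (0:ℝ) < (n:ℝ) := by exact_mod_cast Nat.pos_of_ne_zero (by omega)
  have hA : (0:ℝ) < (n:ℝ) * b := mul_pos hn0 hb0'
  set h : ℝ := ((n:ℝ) * b)⁻¹ with hhdef
  have hh : 0 < h := inv_pos.2 hA
  set a : ℕ → ℝ := fun j => ((t:ℝ) - (n:ℝ) + (j:ℝ)) * h with hadef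
  have hstep : ∀ j : ℕ, (j:ℝ)*h ≤ ((j:ℝ)+1)*h := by
    intro j
    have hr : ((j:ℝ)+1)*h = (j:ℝ)*h + h := by ring
    linarith [hh.le]
  set f : ℝ → ℝ := fun z => |z| ^ k * K z with hfdef
  have hfi : Integrable f := by
    rcases hk with rfl | rfl
    · rw [hfdef]; simpa using hKi
    · rw [hfdef]; simpa using hzKi
  -- rewrite the sum
  have hsum : ∑ i ∈ Finset.Icc 1 n, |((t:ℝ) - (i:ℝ)) / ((n:ℝ)*b)| ^ k *
        K (((t:ℝ) - (i:ℝ)) / ((n:ℝ)*b))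
      = ∑ j ∈ Finset.range n, f (a j) := by
    rw [← Finset.Ico_add_one_right_eq_Icc, Finset.sum_Ico_eq_sum_range]
    rw [← Finset.sum_range_reflect]
    refine Finset.sum_congr rfl fun j hj => ?_
    have hjn := Finset.mem_range.mp hj
    have hcast : ((1 + (n + 1 - 1 - 1 - j) : ℕ) : ℝ) = (n:ℝ) - (j:ℝ) := by
      have h1 : 1 + (n + 1 - 1 - 1 - j) = n - j := by omega
      rw [h1, Nat.cast_sub (by omega)]
    rw [hcast]
    have harg : ((t:ℝ) - ((n:ℝ) - (j:ℝ))) / ((n:ℝ)*b) = a j := by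
      rw [hadef, hhdef]
      simp only
      rw [div_eq_mul_inv]
      ring
    rw [harg, hfdef]
  -- rewrite the integral
  have hlo : ((t:ℝ)/(n:ℝ) - 1)/b = a 0 := by
    rw [hadef, hhdef]
    simp only [Nat.cast_zero]
    field_simp
    ring
  have hhi : ((t:ℝ)/(n:ℝ))/b = a n := by
    rw [hadef, hhdef]
    simp only
    field_simp
    ring
  have hadj : (∫ z in (a 0)..(a n), f z) = ∑ j ∈ Finset.range n, ∫ z in (a j)..(a (j+1)), f z :=
    (intervalIntegral.sum_integral_adjacent_intervals (fun j _ => hfi.intervalIntegrable)).symm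
  rw [hsum, hlo, hhi]
  have hintg : (∫ z in (a 0)..(a n), |z| ^ k * K z) = ∫ z in (a 0)..(a n), f z := by
    rw [hfdef]
  rw [hintg, hadj, one_div, ← hhdef, Finset.mul_sum, ← Finset.sum_sub_distrib]
  refine le_trans (Finset.abs_sum_le_sum_abs _ _) ?_
  set E : ℕ → ℝ := fun j => |h * f (a j) - ∫ z in (a j)..(a (j+1)), f z| with hEdef
  have hsplit : ∑ j ∈ Finset.range n, E j
      = ∑ j ∈ Finset.range (n - t), E j + ∑ j ∈ Finset.range t, E ((n-t) + j) := by
    rw [← Finset.sum_range_add_sum_Ico E (Nat.sub_le n t), Finset.sum_Ico_eq_sum_range]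
    have : n - (n - t) = t := by omega
    rw [this]
  have hpos : ∑ j ∈ Finset.range t, E ((n-t) + j) ≤ C0 * h := by
    have hEeq : ∀ j ∈ Finset.range t, E ((n-t)+j)
        = |h * (|(j:ℝ)*h| ^ k * K ((j:ℝ)*h))
            - ∫ z in ((j:ℝ)*h)..(((j:ℝ)+1)*h), |z| ^ k * K z| := by
      intro j hj
      have c1 : a ((n-t)+j) = (j:ℝ)*h := by
        rw [hadef]
        simp only
        rw [Nat.cast_add, Nat.cast_sub htn]
        ring
      have c2 : a ((n-t)+j+1) = ((j:ℝ)+1)*h := by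
        rw [hadef]
        simp only
        push_cast [Nat.cast_sub htn]
        ring
      rw [hEdef]
      simp only
      rw [c1, c2, hfdef]
    rw [Finset.sum_congr rfl hEeq]
    rw [hC0]
    exact stmt12_side hKm hK0 hCK hKanti hKi (le_of_eq hKint) hzKi (le_refl M1) hk hh t
      (fun j => (j:ℝ)*h)
      (fun j => ⟨le_refl _, hstep j⟩)
  have hneg : ∑ j ∈ Finset.range (n-t), E j ≤ C0 * h := by
    rw [← Finset.sum_range_reflect]
    have hEeq : ∀ j ∈ Finset.range (n-t), E (n - t - 1 - j)
        = |h * (|((j:ℝ)+1)*h| ^ k * Gn (((j:ℝ)+1)*h))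
            - ∫ z in ((j:ℝ)*h)..(((j:ℝ)+1)*h), |z| ^ k * Gn z| := by
      intro j hj
      have hjM := Finset.mem_range.mp hj
      have c1 : a (n - t - 1 - j) = -(((j:ℝ)+1)*h) := by
        rw [hadef]
        simp only
        have : ((n - t - 1 - j : ℕ) : ℝ) = (n:ℝ) - (t:ℝ) - 1 - (j:ℝ) := by
          have h1 : n - t - 1 - j + (j + 1 + t) = n := by omega
          have h2 : ((n - t - 1 - j : ℕ) : ℝ) + ((j:ℝ) + 1 + (t:ℝ)) = (n:ℝ) := by
            exact_mod_cast h1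
          linarith
        rw [this]
        ring
      have c2 : a (n - t - 1 - j + 1) = -((j:ℝ)*h) := by
        rw [hadef]
        simp only
        have : ((n - t - 1 - j + 1 : ℕ) : ℝ) = (n:ℝ) - (t:ℝ) - (j:ℝ) := by
          have h1 : n - t - 1 - j + 1 + (j + t) = n := by omega
          have h2 : ((n - t - 1 - j + 1 : ℕ) : ℝ) + ((j:ℝ) + (t:ℝ)) = (n:ℝ) := by
            exact_mod_cast h1
          linarith
        rw [this]
        ring
      rw [hEdef]
      simp only
      rw [c1, c2]
      rw [← intervalIntegral.integral_comp_neg (f := f)]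
      rw [hfdef, hGndef]
      simp only [abs_neg]
    rw [Finset.sum_congr rfl hEeq]
    rw [hC0]
    exact stmt12_side hGnm hGn0 hGnCK hGnanti hGni hGn1 hzGni hMn1 hk hh (n-t)
      (fun j => ((j:ℝ)+1)*h)
      (fun j => ⟨hstep j, le_refl _⟩)
  have hfin : ∑ j ∈ Finset.range n, E j ≤ 2 * C0 * h := by
    rw [hsplit]; linarith
  refine le_trans hfin ?_
  have hnb0 : (0:ℝ) < (n:ℝ) * bseq n := by positivity
  have hmb : cmin * ((n:ℝ) * bseq n) ≤ (n:ℝ) * b := by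
    have := mul_le_mul_of_nonneg_left hb.1 hn0.le
    nlinarith
  have hhle : h ≤ (cmin * ((n:ℝ) * bseq n))⁻¹ := by
    rw [hhdef]
    exact inv_anti₀ (by positivity) hmb
  calc 2*C0*h ≤ 2*C0 * (cmin * ((n:ℝ) * bseq n))⁻¹ :=
      mul_le_mul_of_nonneg_left hhle (by positivity)
    _ = (2*C0/cmin) * ((n:ℝ)*bseq n)⁻¹ := by
        rw [mul_inv]
        field_simp
    _ ≤ (2*C0/cmin + 1) * ((n:ℝ)*bseq n)⁻¹ := by
        have : (0:ℝ) ≤ ((n:ℝ)*bseq n)⁻¹ := by positivity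
        nlinarith
    _ = (2*C0/cmin + 1) / ((n:ℝ)*bseq n) := (div_eq_mul_inv _ _).symm


end
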